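/- Let A be a C*-algebra, X a semi-inner product A-module, and x, y ∈ X. If |y| = ⟨y,y⟩^{1/2} belongs to the center of A (i.e. commutes with every element of A), then the strengthened Cauchy–Schwarz inequality ⟨x,y⟩⟨y,x⟩ ≤ ⟨x,x⟩⟨y,y⟩ holds in A. -/

import Mathlib

/-- A semi-inner product `A`-module: a right `A`-module `X` (which is also a complex
vector space, with compatible actions) together with an `A`-valued semi-inner product. -/
structure SemiInnerProductModule (A : Type*) (X : Type*)
    [NonUnitalCStarAlgebra A] [PartialOrder A] [StarOrderedRing A]
    [AddCommGroup X] [Module ℂ X] where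
  /-- the right action of `A` on `X` -/
  rsmul : X → A → X
  /-- the `A`-valued semi-inner product -/
  inner : X → X → A
  add_rsmul : ∀ (x y : X) (a : A), rsmul (x + y) a = rsmul x a + rsmul y a
  rsmul_add : ∀ (x : X) (a b : A), rsmul x (a + b) = rsmul x a + rsmul x b
  rsmul_mul : ∀ (x : X) (a b : A), rsmul (rsmul x a) b = rsmul x (a * b)
  smul_rsmul : ∀ (c : ℂ) (x : X) (a : A), rsmul (c • x) a = c • rsmul x a
  rsmul_smul : ∀ (c : ℂ) (x : X) (a : A), rsmul x (c • a) = c • rsmul x a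
  inner_add : ∀ (x y z : X), inner x (y + z) = inner x y + inner x z
  inner_smul : ∀ (c : ℂ) (x y : X), inner x (c • y) = c • inner x y
  inner_rsmul : ∀ (x y : X) (a : A), inner x (rsmul y a) = inner x y * a
  star_inner : ∀ (x y : X), star (inner x y) = inner y x
  inner_self_nonneg : ∀ x : X, 0 ≤ inner x x

/-- Positivity of a matrix as an element of the C⋆-algebra `Mₙ(A)`:
a matrix is positive iff it is of the form `bᴴ * b`. -/
def Matrix.IsPosElem {A : Type*} {n : ℕ} [NonUnitalCStarAlgebra A]
    (M : Matrix (Fin n) (Fin n) A) : Prop :=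
  ∃ b : Matrix (Fin n) (Fin n) A, M = b.conjTranspose * b

/-! ### Auxiliary lemmas -/

open scoped ContinuousMapZero

section AuxCommute

variable {A : Type*} [NonUnitalCStarAlgebra A] [PartialOrder A] [StarOrderedRing A]

/-- An element of the real continuous functional calculus of `b` commutes with every
element that commutes with `b`. -/
lemma commute_cfcn_real (f : ℝ → ℝ) {b v : A} (hb : IsSelfAdjoint b)
    (h : b * v = v * b) : cfcₙ f b * v = v * cfcₙ f b := by
  clear hb
  refine cfcₙ_cases (fun z => z * v = v * z) b f (by simp) fun hf hf0 hb' => ?_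
  have key : ∀ g : C(quasispectrum ℝ b, ℝ)₀, cfcₙHom hb' g * v = v * cfcₙHom hb' g := by
    intro g
    have hS : IsClosed {g : C(quasispectrum ℝ b, ℝ)₀ |
        cfcₙHom hb' g * v = v * cfcₙHom hb' g} :=
      isClosed_eq ((cfcₙHom_isClosedEmbedding hb').continuous.mul continuous_const)
        (continuous_const.mul (cfcₙHom_isClosedEmbedding hb').continuous)
    have hd : Dense (NonUnitalStarAlgebra.adjoin ℝ
        {(ContinuousMapZero.id (quasispectrum ℝ b) : C(quasispectrum ℝ b, ℝ)₀)} : Set C(quasispectrum ℝ b, ℝ)₀) :=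
      ContinuousMapZero.adjoin_id_dense (quasispectrum ℝ b)
    have hsub : (NonUnitalStarAlgebra.adjoin ℝ
        {(ContinuousMapZero.id (quasispectrum ℝ b) : C(quasispectrum ℝ b, ℝ)₀)} : Set C(quasispectrum ℝ b, ℝ)₀) ⊆
        {g : C(quasispectrum ℝ b, ℝ)₀ | cfcₙHom hb' g * v = v * cfcₙHom hb' g} := by
      intro p hp
      induction hp using NonUnitalStarAlgebra.adjoin_induction with
      | mem z hz =>
        simp only [Set.mem_singleton_iff] at hz
        subst hz
        have hid : cfcₙHom hb' (ContinuousMapZero.id (quasispectrum ℝ b) : C(quasispectrum ℝ b, ℝ)₀) = b :=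
          cfcₙHom_id hb'
        show cfcₙHom hb' (ContinuousMapZero.id (quasispectrum ℝ b) : C(quasispectrum ℝ b, ℝ)₀) * v
            = v * cfcₙHom hb' (ContinuousMapZero.id (quasispectrum ℝ b) : C(quasispectrum ℝ b, ℝ)₀)
        rw [hid]
        exact h
      | add z w hz hw hpz hpw =>
        simp only [Set.mem_setOf_eq, map_add, add_mul, mul_add] at *
        rw [hpz, hpw]
      | zero => simp [Set.mem_setOf_eq]
      | mul z w hz hw hpz hpw =>
        simp only [Set.mem_setOf_eq, map_mul] at *
        rw [mul_assoc, hpw, ← mul_assoc, hpz, mul_assoc]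
      | smul r z hz hpz =>
        simp only [Set.mem_setOf_eq, map_smul, smul_mul_assoc, mul_smul_comm] at *
        rw [hpz]
      | star z hz hpz =>
        have hzz : star z = z := by ext s; simp
        rw [hzz]
        exact hpz
    have hmem : g ∈ closure {g : C(quasispectrum ℝ b, ℝ)₀ |
        cfcₙHom hb' g * v = v * cfcₙHom hb' g} :=
      closure_mono hsub (hd.closure_eq ▸ Set.mem_univ g :)
    rwa [hS.closure_eq] at hmem
  exact key _

/-- Multiplication rule for the non-unital real continuous functional calculus. -/
lemma cfcn_mul_eq {b : A} (f g : ℝ → ℝ) (hf : Continuous f) (hf0 : f 0 = 0)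
    (hg : Continuous g) (hg0 : g 0 = 0) :
    cfcₙ f b * cfcₙ g b = cfcₙ (fun σ => f σ * g σ) b :=
  (cfcₙ_mul f g b hf.continuousOn hf0 hg.continuousOn hg0).symm

end AuxCommute

namespace SemiInnerProductModule

variable {A X : Type*} [NonUnitalCStarAlgebra A] [PartialOrder A] [StarOrderedRing A]
  [AddCommGroup X] [Module ℂ X] (P : SemiInnerProductModule A X)

lemma inner_zero' (x : X) : P.inner x 0 = 0 := by
  have h := P.inner_add x 0 0
  rw [add_zero] at h
  exact (add_eq_left.mp h.symm)

lemma inner_neg' (x y : X) : P.inner x (-y) = - P.inner x y := by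
  have h := P.inner_add x y (-y)
  rw [add_neg_cancel, P.inner_zero'] at h
  exact eq_neg_of_add_eq_zero_right h.symm

lemma inner_sub' (x y z : X) : P.inner x (y - z) = P.inner x y - P.inner x z := by
  rw [sub_eq_add_neg, P.inner_add, P.inner_neg', sub_eq_add_neg]

lemma inner_sub_left' (x y z : X) : P.inner (x - y) z = P.inner x z - P.inner y z := by
  rw [← P.star_inner z, P.inner_sub', star_sub, P.star_inner, P.star_inner]

lemma inner_rsmul_left' (x y : X) (a : A) :
    P.inner (P.rsmul x a) y = star a * P.inner x y := by
  rw [← P.star_inner y, P.inner_rsmul, star_mul, P.star_inner]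

lemma expand_nonneg (x y : X) (u v : A) :
    0 ≤ star u * P.inner x x * u - star u * P.inner x y * v
        - star v * P.inner y x * u + star v * P.inner y y * v := by
  have h := P.inner_self_nonneg (P.rsmul x u - P.rsmul y v)
  simp only [P.inner_sub', P.inner_sub_left', P.inner_rsmul, P.inner_rsmul_left'] at h
  calc (0 : A) ≤ _ := h
    _ = star u * P.inner x x * u - star u * P.inner x y * v
        - star v * P.inner y x * u + star v * P.inner y y * v := by noncomm_ring

lemma expand_nonneg' (x y : X) (u : A) :
    0 ≤ star u * P.inner x x * u - star u * P.inner x y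
        - P.inner y x * u + P.inner y y := by
  have h := P.inner_self_nonneg (P.rsmul x u - y)
  simp only [P.inner_sub', P.inner_sub_left', P.inner_rsmul, P.inner_rsmul_left'] at h
  calc (0 : A) ≤ _ := h
    _ = star u * P.inner x x * u - star u * P.inner x y
        - P.inner y x * u + P.inner y y := by noncomm_ring

end SemiInnerProductModule

section CoreLemmas

variable {A : Type*} [NonUnitalCStarAlgebra A] [PartialOrder A] [StarOrderedRing A]

/-- Cauchy–Schwarz core inequality. -/
lemma cs_core (a c t : A) (ha : 0 ≤ a)
    (hexp : ∀ u : A, 0 ≤ star u * a * u - star u * star t - t * u + c) :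
    t * star t ≤ (‖a‖ + 1) • c := by
  set M : ℝ := ‖a‖ + 1 with hM_def
  have hM : 0 < M := by positivity
  have h := hexp (M⁻¹ • star t)
  have hsu : star (M⁻¹ • star t) = M⁻¹ • t := by
    rw [star_smul, star_star, star_trivial]
  rw [hsu] at h
  have e1 : (M⁻¹ • t) * a * (M⁻¹ • star t) = (M⁻¹ * M⁻¹) • (t * a * star t) := by
    simp [smul_mul_assoc, mul_smul_comm, smul_smul]
  have e2 : (M⁻¹ • t) * star t = M⁻¹ • (t * star t) := smul_mul_assoc _ _ _
  have e3 : t * (M⁻¹ • star t) = M⁻¹ • (t * star t) := mul_smul_comm _ _ _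
  rw [e1, e2, e3] at h
  have hconj : t * a * star t ≤ ‖a‖ • (t * star t) :=
    CStarAlgebra.star_right_conjugate_le_norm_smul (IsSelfAdjoint.of_nonneg ha)
  have h5 : (M⁻¹ * M⁻¹) • (t * a * star t) ≤ (M⁻¹ * M⁻¹) • (‖a‖ • (t * star t)) :=
    smul_le_smul_of_nonneg_left hconj (by positivity)
  have h6 : (M⁻¹ * M⁻¹) • (‖a‖ • (t * star t)) ≤ M⁻¹ • (t * star t) := by
    rw [smul_smul]
    refine smul_le_smul_of_nonneg_right ?_ (mul_star_self_nonneg t)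
    have ha' : ‖a‖ ≤ M := by rw [hM_def]; linarith
    have hinv : (0:ℝ) ≤ M⁻¹ * M⁻¹ := by positivity
    calc M⁻¹ * M⁻¹ * ‖a‖ ≤ M⁻¹ * M⁻¹ * M := by nlinarith
      _ = M⁻¹ := by field_simp
  have h7 : 0 ≤ M⁻¹ • (t * star t) - M⁻¹ • (t * star t) - M⁻¹ • (t * star t) + c := by
    calc (0:A) ≤ _ := h
      _ ≤ M⁻¹ • (t * star t) - M⁻¹ • (t * star t) - M⁻¹ • (t * star t) + c := by
        have := h5.trans h6
        exact add_le_add_left (sub_le_sub_right (sub_le_sub_right this _) _) _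
  have h8 : M⁻¹ • (t * star t) ≤ c := by
    rw [show M⁻¹ • (t * star t) - M⁻¹ • (t * star t) - M⁻¹ • (t * star t) + c
        = c - M⁻¹ • (t * star t) from by abel] at h7
    exact sub_nonneg.mp h7
  calc t * star t = M • (M⁻¹ • (t * star t)) := by
        rw [smul_smul, mul_inv_cancel₀ hM.ne', one_smul]
    _ ≤ M • c := smul_le_smul_of_nonneg_left h8 hM.le

/-- Algebraic core of the key inequality. -/
lemma key_core (a c t b W : A) (hbb : b * b = c)
    (hcb : ∀ r : A, b * r = r * b) (hWcomm : ∀ r : A, W * r = r * W)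
    (hWsa : star W = W) (hbsa : star b = b)
    (h : 0 ≤ star b * a * b - star b * star t * (W * t)
        - star (W * t) * t * b + star (W * t) * c * (W * t)) :
    star t * t ≤ a * c + star (t - b * W * t) * (t - b * W * t) := by
  simp only [star_mul, hWsa, hbsa] at h
  have T1 : b * a * b = a * c := by
    rw [hcb a, mul_assoc, hbb]
  have T2 : b * star t * (W * t) = star t * (b * W * t) := by
    rw [hcb (star t), mul_assoc (star t) b (W * t), ← mul_assoc b W t]
  have T3 : star t * W * t * b = star t * (b * W * t) := by
    rw [mul_assoc (star t * W) t b, ← hcb t, ← mul_assoc (star t * W) b t,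
      mul_assoc (star t) W b, hWcomm b, mul_assoc (star t) (b * W) t]
  have T4 : star t * W * c * (W * t) = star t * (b * W * (b * W * t)) := by
    rw [← hbb]
    rw [mul_assoc (star t) W (b*b), ← mul_assoc W b b, hWcomm b, ← mul_assoc (star t) (b*W) b,
      mul_assoc (star t * (b*W)) b (W*t), ← mul_assoc b W t,
      mul_assoc (star t) (b*W) ((b*W)*t)]
  rw [T1, T2, T3, T4] at h
  rw [← sub_nonneg]
  have hfin : a * c + star (t - b * W * t) * (t - b * W * t) - star t * t
      = a * c - star t * (b * W * t) - star t * (b * W * t) + star t * (b * W * (b * W * t)) := by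
    simp only [star_sub, star_mul, hWsa, hbsa]
    rw [hWcomm b]
    noncomm_ring
  rw [hfin]
  exact h

open Unitization in
/-- Conjugation bound, proved by passing to the unitization. -/
lemma norm_bound_core (t c E G : A) (M : ℝ)
    (htt : t * star t ≤ M • c)
    (hEsa : star E = E) (hcsa : IsSelfAdjoint c) (hGsa : star G = G)
    (hGG : c - E * c - c * E + E * (c * E) = G * G) :
    (t - E * t) * star (t - E * t) ≤ M • (G * G) := by
  have sa1 : IsSelfAdjoint (t * star t) := IsSelfAdjoint.mul_star_self t
  have sa2 : IsSelfAdjoint (M • c) := (IsSelfAdjoint.all M).smul hcsa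
  have hu : ((t * star t : A) : Unitization ℂ A) ≤ ((M • c : A) : Unitization ℂ A) := by
    rw [Unitization.inr_le_iff _ _ sa1 sa2]
    exact htt
  set u : Unitization ℂ A := 1 - (E : Unitization ℂ A) with hu_def
  have husa : star u = u := by
    rw [hu_def, star_sub, star_one, ← Unitization.inr_star, hEsa]
  have hconj := star_left_conjugate_le_conjugate hu u
  rw [husa] at hconj
  have hL : u * ((t * star t : A) : Unitization ℂ A) * u
      = (((t - E * t) * star (t - E * t) : A) : Unitization ℂ A) := by
    rw [hu_def]
    simp only [star_sub, star_mul, ← Unitization.inr_star, hEsa, Unitization.inr_mul,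
      Unitization.inr_sub]
    noncomm_ring
  have hR : u * ((M • c : A) : Unitization ℂ A) * u
      = ((M • (G * G) : A) : Unitization ℂ A) := by
    rw [← hGG, hu_def]
    simp only [Unitization.inr_smul, Unitization.inr_sub, Unitization.inr_add,
      Unitization.inr_mul, smul_mul_assoc, mul_smul_comm]
    congr 1
    noncomm_ring
  rw [hL, hR] at hconj
  have sa3 : IsSelfAdjoint ((t - E * t) * star (t - E * t)) := .mul_star_self _
  have sa4 : IsSelfAdjoint (M • (G * G)) := by
    refine (IsSelfAdjoint.all M).smul ?_
    rw [IsSelfAdjoint, star_mul, hGsa]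
  rwa [Unitization.inr_le_iff _ _ sa3 sa4] at hconj

section eps
variable {b : A} (hbsa : IsSelfAdjoint b) {ε : ℝ} (hε : 0 < ε)

include hε

lemma hWc : Continuous (fun σ : ℝ => σ / (σ^2 + ε)) :=
  continuous_id.div (by fun_prop) (fun σ => by positivity)

lemma hfEc : Continuous (fun σ : ℝ => σ * (σ / (σ^2 + ε))) :=
  continuous_id.mul (hWc hε)

lemma hfGc : Continuous (fun σ : ℝ => σ - σ * (σ * (σ / (σ^2 + ε)))) :=
  continuous_id.sub (continuous_id.mul (hfEc hε))

include hbsa in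
omit hε in
lemma hcc' (c : A) (hbb : b * b = c) : c = cfcₙ (fun σ : ℝ => σ * σ) b :=
  calc c = b * b := hbb.symm
    _ = cfcₙ (fun σ : ℝ => σ) b * cfcₙ (fun σ : ℝ => σ) b := by rw [cfcₙ_id' ℝ b]
    _ = cfcₙ (fun σ : ℝ => σ * σ) b :=
        cfcn_mul_eq _ _ continuous_id' rfl continuous_id' rfl

include hbsa in
lemma hEc' (W : A) (hW : W = cfcₙ (fun σ : ℝ => σ / (σ^2 + ε)) b) :
    b * W = cfcₙ (fun σ : ℝ => σ * (σ / (σ^2 + ε))) b :=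
  calc b * W = cfcₙ (fun σ : ℝ => σ) b * cfcₙ (fun σ : ℝ => σ / (σ^2 + ε)) b := by
        rw [cfcₙ_id' ℝ b, hW]
    _ = cfcₙ (fun σ : ℝ => σ * (σ / (σ^2 + ε))) b :=
        cfcn_mul_eq _ _ continuous_id' rfl (hWc hε) (by simp)

include hbsa in
lemma hGc' (E : A) (hE : E = cfcₙ (fun σ : ℝ => σ * (σ / (σ^2 + ε))) b) :
    b - b * E = cfcₙ (fun σ : ℝ => σ - σ * (σ * (σ / (σ^2 + ε)))) b := by
  have h1 : b * E = cfcₙ (fun σ : ℝ => σ * (σ * (σ / (σ^2 + ε)))) b :=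
    calc b * E = cfcₙ (fun σ : ℝ => σ) b * cfcₙ (fun σ : ℝ => σ * (σ / (σ^2 + ε))) b := by
          rw [cfcₙ_id' ℝ b, hE]
      _ = _ := cfcn_mul_eq _ _ continuous_id' rfl (hfEc hε) (by simp)
  calc b - b * E = cfcₙ (fun σ : ℝ => σ) b - cfcₙ (fun σ : ℝ => σ * (σ * (σ / (σ^2 + ε)))) b := by
        rw [cfcₙ_id' ℝ b, h1]
    _ = _ := (cfcₙ_sub (fun σ : ℝ => σ) (fun σ : ℝ => σ * (σ * (σ / (σ^2 + ε)))) b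
        continuous_id'.continuousOn rfl ((continuous_id'.mul (hfEc hε))).continuousOn
        (by simp)).symm

include hbsa in
lemma hGG' (c E G : A) (hbb : b * b = c)
    (hE : E = cfcₙ (fun σ : ℝ => σ * (σ / (σ^2 + ε))) b)
    (hG : G = cfcₙ (fun σ : ℝ => σ - σ * (σ * (σ / (σ^2 + ε)))) b) :
    c - E * c - c * E + E * (c * E) = G * G := by
  have hcc := hcc' hbsa c hbb
  set fE : ℝ → ℝ := fun σ => σ * (σ / (σ^2 + ε)) with hfE_def
  set fc : ℝ → ℝ := fun σ => σ * σ with hfc_def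
  set fG : ℝ → ℝ := fun σ => σ - σ * fE σ with hfG_def
  have hfE : Continuous fE := hfEc hε
  have hfc : Continuous fc := by fun_prop
  have hfG : Continuous fG := hfGc hε
  have hfE0 : fE 0 = 0 := by simp [hfE_def]
  have hfc0 : fc 0 = 0 := by simp [hfc_def]
  have hfG0 : fG 0 = 0 := by simp [hfG_def, hfE_def]
  have h1 : E * c = cfcₙ (fun σ => fE σ * fc σ) b := by
    rw [hE, hcc, cfcn_mul_eq _ _ hfE hfE0 hfc hfc0]
  have h2 : c * E = cfcₙ (fun σ => fc σ * fE σ) b := by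
    rw [hE, hcc, cfcn_mul_eq _ _ hfc hfc0 hfE hfE0]
  have h4 : E * (c * E) = cfcₙ (fun σ => fE σ * (fc σ * fE σ)) b := by
    rw [h2, hE, cfcn_mul_eq _ (fun σ => fc σ * fE σ) hfE hfE0 (hfc.mul hfE) (by simp [hfc0, hfE0])]
  have h5 : G * G = cfcₙ (fun σ => fG σ * fG σ) b := by
    rw [hG, cfcn_mul_eq _ _ hfG hfG0 hfG hfG0]
  rw [h4, h1, h2, h5, hcc]
  rw [← cfcₙ_sub fc (fun σ => fE σ * fc σ) b hfc.continuousOn hfc0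
      (hfE.mul hfc).continuousOn (by simp [hfE0]),
    ← cfcₙ_sub (fun σ => fc σ - fE σ * fc σ) (fun σ => fc σ * fE σ) b
      (hfc.sub (hfE.mul hfc)).continuousOn (by simp [hfc0, hfE0])
      (hfc.mul hfE).continuousOn (by simp [hfc0]),
    ← cfcₙ_add (fun σ => fc σ - fE σ * fc σ - fc σ * fE σ) (fun σ => fE σ * (fc σ * fE σ)) b
      ((hfc.sub (hfE.mul hfc)).sub (hfc.mul hfE)).continuousOn (by simp [hfc0, hfE0])
      (hfE.mul (hfc.mul hfE)).continuousOn (by simp [hfE0])]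
  refine cfcₙ_congr fun σ _ => ?_
  simp only [hfE_def, hfc_def, hfG_def]
  have hd : σ^2 + ε ≠ 0 := by positivity
  field_simp
  ring

lemma hGnorm' (G : A) (hG : G = cfcₙ (fun σ : ℝ => σ - σ * (σ * (σ / (σ^2 + ε)))) b) :
    ‖G‖ ≤ Real.sqrt ε / 2 := by
  rw [hG]
  refine norm_cfcₙ_le fun σ _ => ?_
  have hd : (0:ℝ) < σ^2 + ε := by positivity
  have hval : σ - σ * (σ * (σ / (σ^2 + ε))) = σ * ε / (σ^2 + ε) := by
    field_simp
    ring
  rw [hval, Real.norm_eq_abs, abs_div, abs_of_pos hd, abs_mul, abs_of_pos hε]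
  rw [div_le_iff₀ hd]
  have hss : Real.sqrt ε * Real.sqrt ε = ε := Real.mul_self_sqrt hε.le
  nlinarith [sq_nonneg (|σ| - Real.sqrt ε), sq_abs σ, abs_nonneg σ, Real.sqrt_nonneg ε]

end eps

end CoreLemmas

/-- If `|y| = ⟨y,y⟩^(1/2)` lies in the center of `A`, then the strengthened
Cauchy–Schwarz inequality `⟨x,y⟩⟨y,x⟩ ≤ ⟨x,x⟩⟨y,y⟩` holds. -/
theorem inner_mul_inner_le_of_central {A X : Type*}
    [NonUnitalCStarAlgebra A] [PartialOrder A] [StarOrderedRing A]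
    [AddCommGroup X] [Module ℂ X]
    (P : SemiInnerProductModule A X) (x y : X)
    (hcentral : ∀ a : A, CFC.sqrt (P.inner y y) * a = a * CFC.sqrt (P.inner y y)) :
    P.inner x y * P.inner y x ≤ P.inner x x * P.inner y y := by
  have ha : (0:A) ≤ P.inner x x := P.inner_self_nonneg x
  have hc : (0:A) ≤ P.inner y y := P.inner_self_nonneg y
  set a := P.inner x x with ha_def
  set c := P.inner y y with hc_def
  set t := P.inner y x with ht_def
  have hst : P.inner x y = star t := (P.star_inner y x).symm
  set b := CFC.sqrt c with hb_def
  have hb0 : (0:A) ≤ b := CFC.sqrt_nonneg _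
  have hbsa : IsSelfAdjoint b := .of_nonneg hb0
  have hbb : b * b = c := CFC.sqrt_mul_sqrt_self c hc
  have hcsa : IsSelfAdjoint c := .of_nonneg hc
  -- Cauchy–Schwarz
  set M : ℝ := ‖a‖ + 1 with hM_def
  have hM : (0:ℝ) < M := by positivity
  have hexp : ∀ u : A, 0 ≤ star u * a * u - star u * star t - t * u + c := by
    intro u
    have h := P.expand_nonneg' x y u
    rwa [hst] at h
  have htt : t * star t ≤ M • c := cs_core a c t ha hexp
  -- the approximating family
  set ε : ℕ → ℝ := fun n => ((n:ℝ)+1)⁻¹ with hε_def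
  have hε : ∀ n, 0 < ε n := fun n => by positivity
  set W : ℕ → A := fun n => cfcₙ (fun σ : ℝ => σ / (σ^2 + ε n)) b with hW_def
  have hWn : ∀ n, W n = cfcₙ (fun σ : ℝ => σ / (σ^2 + ε n)) b := fun n => rfl
  have hWcomm : ∀ n (r : A), W n * r = r * W n := fun n r =>
    commute_cfcn_real _ hbsa (hcentral r)
  have hWsa : ∀ n, star (W n) = W n := fun n =>
    (cfcₙ_predicate (fun σ : ℝ => σ / (σ^2 + ε n)) b : IsSelfAdjoint _).star_eq
  have hcb : ∀ r : A, b * r = r * b := hcentral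
  set s : ℕ → A := fun n => t - b * W n * t with hs_def
  -- key inequality
  have hkey : ∀ n, star t * t ≤ a * c + star (s n) * s n := by
    intro n
    have h := P.expand_nonneg x y b (W n * t)
    rw [hst] at h
    exact key_core a c t b (W n) hbb hcb (hWcomm n) (hWsa n) hbsa.star_eq h
  -- norm bound
  have hEc : ∀ n, b * W n = cfcₙ (fun σ : ℝ => σ * (σ / (σ^2 + ε n))) b := fun n =>
    hEc' hbsa (hε n) (W n) (hWn n)
  set G : ℕ → A := fun n => b - b * (b * W n) with hG_def
  have hGc : ∀ n, G n = cfcₙ (fun σ : ℝ => σ - σ * (σ * (σ / (σ^2 + ε n)))) b := fun n =>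
    hGc' hbsa (hε n) (b * W n) (hEc n)
  have hGsa : ∀ n, star (G n) = G n := fun n => by
    rw [hGc n]
    exact (cfcₙ_predicate _ b : IsSelfAdjoint _).star_eq
  have hEsa : ∀ n, star (b * W n) = b * W n := fun n => by
    rw [star_mul, hWsa n, hbsa.star_eq, hWcomm n b]
  have hGG : ∀ n, c - (b * W n) * c - c * (b * W n) + (b * W n) * (c * (b * W n))
      = G n * G n := fun n =>
    hGG' hbsa (hε n) c (b * W n) (G n) hbb (hEc n) (hGc n)
  have hGnorm : ∀ n, ‖G n‖ ≤ Real.sqrt (ε n) / 2 := fun n =>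
    hGnorm' (hε n) (G n) (hGc n)
  have hbound : ∀ n, s n * star (s n) ≤ M • (G n * G n) := by
    intro n
    have := norm_bound_core t c (b * W n) (G n) M htt (hEsa n) hcsa (hGsa n) (hGG n)
    simpa only [hs_def] using this
  have hnorm : ∀ n, ‖star (s n) * s n‖ ≤ M * (ε n / 4) := by
    intro n
    have e1 : ‖star (s n) * s n‖ = ‖s n‖ * ‖s n‖ := CStarRing.norm_star_mul_self
    have e2 : ‖s n * star (s n)‖ = ‖s n‖ * ‖s n‖ := CStarRing.norm_self_mul_star
    have le3 : ‖s n * star (s n)‖ ≤ ‖M • (G n * G n)‖ :=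
      CStarAlgebra.norm_le_norm_of_nonneg_of_le (mul_star_self_nonneg _) (hbound n)
    have e4 : ‖M • (G n * G n)‖ = M * ‖G n * G n‖ := by
      rw [norm_smul, Real.norm_of_nonneg hM.le]
    have e5 : ‖G n * G n‖ = ‖G n‖ * ‖G n‖ := by
      nth_rewrite 1 [← hGsa n]
      exact CStarRing.norm_star_mul_self
    have le6 : ‖G n‖ * ‖G n‖ ≤ (Real.sqrt (ε n) / 2) * (Real.sqrt (ε n) / 2) :=
      mul_le_mul (hGnorm n) (hGnorm n) (norm_nonneg _) (by positivity)
    have e7 : (Real.sqrt (ε n) / 2) * (Real.sqrt (ε n) / 2) = ε n / 4 := by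
      rw [div_mul_div_comm, Real.mul_self_sqrt (hε n).le]
      norm_num
    calc ‖star (s n) * s n‖ = ‖s n * star (s n)‖ := by rw [e1, e2]
      _ ≤ ‖M • (G n * G n)‖ := le3
      _ = M * (‖G n‖ * ‖G n‖) := by rw [e4, e5]
      _ ≤ M * (ε n / 4) := by
          rw [← e7]
          exact mul_le_mul_of_nonneg_left le6 hM.le
  -- passage to the limit
  have hεt : Filter.Tendsto ε Filter.atTop (nhds 0) := by
    have h := tendsto_one_div_add_atTop_nhds_zero_nat (𝕜 := ℝ)
    simpa only [one_div, hε_def] using h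
  have hbt : Filter.Tendsto (fun n => M * (ε n / 4)) Filter.atTop (nhds 0) := by
    have := (hεt.div_const 4).const_mul M
    simpa using this
  have hTend : Filter.Tendsto (fun n => star (s n) * s n) Filter.atTop (nhds 0) :=
    squeeze_zero_norm hnorm hbt
  have hT2 : Filter.Tendsto (fun n => a * c + star (s n) * s n - star t * t)
      Filter.atTop (nhds (a * c - star t * t)) := by
    have h := (Filter.Tendsto.add (tendsto_const_nhds (x := a * c)) hTend).sub
      (tendsto_const_nhds (x := star t * t))
    simpa using h
  have hmem : ∀ n, a * c + star (s n) * s n - star t * t ∈ {z : A | 0 ≤ z} := fun n =>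
    sub_nonneg.mpr (hkey n)
  have hlim : a * c - star t * t ∈ {z : A | 0 ≤ z} :=
    CStarAlgebra.isClosed_nonneg.mem_of_tendsto hT2 (Filter.Eventually.of_forall hmem)
  rw [hst]
  exact sub_nonneg.mp hlim
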